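/- Under the same sampling distribution P(I) ∝ e_Iᵀ L⁻¹ e_I over subsets I of cardinality τ, with G_I = 𝕀_I L⁻¹ − (1/(e_Iᵀ L⁻¹ e_I)) L⁻¹ e_I e_Iᵀ L⁻¹, one has 𝔼_I[G_I] = ((τ−1)/(n−1)) G_{[n]}. -/

import Mathlib

open Finset

variable {α : Type*} [DecidableEq α]

lemma filt_insert (s : Finset α) (a : α) (ha : a ∈ s) (k : ℕ) :
    (s.powersetCard (k+1)).filter (fun I => a ∈ I)
      = ((s.erase a).powersetCard k).image (insert a) := by
  ext I
  simp only [mem_filter, mem_powersetCard, mem_image]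
  constructor
  · rintro ⟨⟨hIs, hcard⟩, haI⟩
    refine ⟨I.erase a, ⟨erase_subset_erase a hIs, ?_⟩, insert_erase haI⟩
    simp [card_erase_of_mem haI, hcard]
  · rintro ⟨J, ⟨hJs, hJcard⟩, rfl⟩
    have haJ : a ∉ J := fun h => (mem_erase.mp (hJs h)).1 rfl
    refine ⟨⟨?_, ?_⟩, mem_insert_self a J⟩
    · intro x hx
      rcases mem_insert.mp hx with rfl | hx
      · exact ha
      · exact (erase_subset a s) (hJs hx)
    · rw [card_insert_of_notMem haJ, hJcard]

lemma insert_injOn (s : Finset α) (a : α) (k : ℕ) :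
    Set.InjOn (insert a) ((s.erase a).powersetCard k : Set (Finset α)) := by
  intro J₁ h₁ J₂ h₂ h
  have n₁ : a ∉ J₁ := fun hh =>
    (mem_erase.mp ((mem_powersetCard.mp (mem_coe.mp h₁)).1 hh)).1 rfl
  have n₂ : a ∉ J₂ := fun hh =>
    (mem_erase.mp ((mem_powersetCard.mp (mem_coe.mp h₂)).1 hh)).1 rfl
  rw [← erase_insert n₁, ← erase_insert n₂, h]

lemma card_filt (s : Finset α) (a : α) (ha : a ∈ s) (k : ℕ) :
    ((s.powersetCard (k+1)).filter (fun I => a ∈ I)).card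
      = (s.card - 1).choose k := by
  rw [filt_insert s a ha k, card_image_of_injOn (insert_injOn s a k),
    card_powersetCard, card_erase_of_mem ha]

lemma card_filt2 (s : Finset α) (a b : α) (ha : a ∈ s) (hb : b ∈ s) (hab : b ≠ a) (k : ℕ) :
    ((s.powersetCard (k+2)).filter (fun I => a ∈ I ∧ b ∈ I)).card
      = (s.card - 2).choose k := by
  have h1 : (s.powersetCard (k+2)).filter (fun I => a ∈ I ∧ b ∈ I)
      = ((s.powersetCard (k+2)).filter (fun I => a ∈ I)).filter (fun I => b ∈ I) := by
    rw [filter_filter]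
  rw [h1, filt_insert s a ha (k+1), filter_image]
  have h2 : ((s.erase a).powersetCard (k+1)).filter (fun J => b ∈ insert a J)
      = ((s.erase a).powersetCard (k+1)).filter (fun J => b ∈ J) := by
    apply filter_congr; intro J _
    simp [mem_insert, hab]
  rw [h2]
  have h3 := card_filt (s.erase a) b (mem_erase.mpr ⟨hab, hb⟩) k
  rw [card_image_of_injOn ((insert_injOn s a (k+1)).mono (coe_subset.mpr (filter_subset _ _))), h3, card_erase_of_mem ha,
    Nat.sub_sub]

lemma sum_powersetCard_sum (s : Finset α) (k : ℕ) (f : α → ℝ) :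
    ∑ I ∈ s.powersetCard (k+1), ∑ x ∈ I, f x
      = ((s.card - 1).choose k : ℝ) * ∑ x ∈ s, f x := by
  have h1 : ∀ I ∈ s.powersetCard (k+1), ∑ x ∈ I, f x
      = ∑ x ∈ s, if x ∈ I then f x else 0 := by
    intro I hI
    rw [← Finset.sum_filter]
    congr 1
    exact (Finset.filter_mem_eq_inter.trans (inter_eq_right.mpr (mem_powersetCard.mp hI).1)).symm
  rw [Finset.sum_congr rfl h1, Finset.sum_comm, Finset.mul_sum]
  apply Finset.sum_congr rfl
  intro x hx
  rw [← Finset.sum_filter, Finset.sum_const, card_filt s x hx k, nsmul_eq_mul]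

set_option maxHeartbeats 1600000 in
theorem stmt4 {n : ℕ} (τ : ℕ) (hτ : 2 ≤ τ) (hτn : τ ≤ n)
    (L : Fin n → ℝ) (hL : ∀ i, 0 < L i) :
    let eI : Finset (Fin n) → (Fin n → ℝ) := fun I i => if i ∈ I then 1 else 0
    let c : Finset (Fin n) → ℝ := fun I => ∑ i ∈ I, (L i)⁻¹
    let v : Finset (Fin n) → (Fin n → ℝ) := fun I i => (L i)⁻¹ * eI I i
    let G : Finset (Fin n) → Matrix (Fin n) (Fin n) ℝ := fun I =>
      Matrix.diagonal (fun i => eI I i * (L i)⁻¹) -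
        (c I)⁻¹ • Matrix.vecMulVec (v I) (v I)
    let Psets := Finset.powersetCard τ (Finset.univ : Finset (Fin n))
    let p : Finset (Fin n) → ℝ := fun I => c I / ∑ J ∈ Psets, c J
    ∑ I ∈ Psets, p I • G I = (((τ : ℝ) - 1) / ((n : ℝ) - 1)) • G Finset.univ := by
  intro eI c v G Psets p
  have heI : eI = fun I i => if i ∈ I then 1 else 0 := rfl
  have hc : c = fun I => ∑ i ∈ I, (L i)⁻¹ := rfl
  have hv : v = fun I i => (L i)⁻¹ * eI I i := rfl
  have hG : G = fun I => Matrix.diagonal (fun i => eI I i * (L i)⁻¹) -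
        (c I)⁻¹ • Matrix.vecMulVec (v I) (v I) := rfl
  have hPsets : Psets = Finset.powersetCard τ (Finset.univ : Finset (Fin n)) := rfl
  have hp : p = fun I => c I / ∑ J ∈ Psets, c J := rfl
  obtain ⟨m, rfl⟩ : ∃ m, τ = m + 2 := ⟨τ - 2, by omega⟩
  obtain ⟨q, rfl⟩ : ∃ q, n = q + 2 := ⟨n - 2, by omega⟩
  have hmq : m ≤ q := by omega
  -- abbreviations
  set A : ℝ := ∑ x : Fin (q+2), (L x)⁻¹ with hA
  set K1 : ℕ := (q+1).choose (m+1) with hK1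
  set K2 : ℕ := q.choose m with hK2
  have hApos : 0 < A := Finset.sum_pos (fun x _ => inv_pos.mpr (hL x)) univ_nonempty
  have hK1pos : 0 < K1 := Nat.choose_pos (by omega)
  have hK1ne : (K1:ℝ) ≠ 0 := Nat.cast_ne_zero.mpr hK1pos.ne'
  have hid : ((q:ℝ)+1) * (K2:ℝ) = (K1:ℝ) * ((m:ℝ)+1) := by
    have h := Nat.add_one_mul_choose_eq q m
    exact_mod_cast h
  have hqne : ((q:ℝ)+1) ≠ 0 := by positivity
  have hK2eq : (K2:ℝ) = (K1:ℝ) * ((m:ℝ)+1) / ((q:ℝ)+1) := by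
    field_simp
    linarith [hid]
  have hcpos : ∀ I ∈ Psets, 0 < c I := by
    intro I hI
    rw [hc]
    apply Finset.sum_pos (fun x _ => inv_pos.mpr (hL x))
    rw [← card_pos, (mem_powersetCard.mp hI).2]; omega
  have hcne : ∀ I ∈ Psets, c I ≠ 0 := fun I hI => (hcpos I hI).ne'
  have hcuniv : c Finset.univ = A := rfl
  have hS : ∑ J ∈ Psets, c J = (K1 : ℝ) * A := by
    rw [hPsets, hc]
    have h := sum_powersetCard_sum (univ : Finset (Fin (q+2))) (m+1) (fun x => (L x)⁻¹)
    simpa using h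
  have hSne : (∑ J ∈ Psets, c J) ≠ 0 := by
    rw [hS]
    positivity
  have hone : ∀ i : Fin (q+2), ∑ I ∈ Psets, (if i ∈ I then (1:ℝ) else 0) = K1 := by
    intro i
    rw [hPsets, Finset.sum_boole]
    norm_cast
    have h := card_filt (univ : Finset (Fin (q+2))) i (mem_univ i) (m+1)
    simpa using h
  have honesq : ∀ i : Fin (q+2),
      ∑ I ∈ Psets, (if i ∈ I then (1:ℝ) else 0) * (if i ∈ I then 1 else 0) = K1 := by
    intro i
    have h : ∀ I : Finset (Fin (q+2)), (if i ∈ I then (1:ℝ) else 0) * (if i ∈ I then 1 else 0)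
        = if i ∈ I then 1 else 0 := fun I => by by_cases h : i ∈ I <;> simp [h]
    simp only [h]; exact hone i
  have htwo : ∀ i j : Fin (q+2), i ≠ j →
      ∑ I ∈ Psets, (if i ∈ I then (1:ℝ) else 0) * (if j ∈ I then 1 else 0) = K2 := by
    intro i j hij
    have h : ∀ I : Finset (Fin (q+2)), (if i ∈ I then (1:ℝ) else 0) * (if j ∈ I then 1 else 0)
        = if i ∈ I ∧ j ∈ I then 1 else 0 := fun I => by
      by_cases h1 : i ∈ I <;> by_cases h2 : j ∈ I <;> simp [h1, h2]
    simp only [h]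
    rw [hPsets, Finset.sum_boole]
    norm_cast
    have h2 := card_filt2 (univ : Finset (Fin (q+2))) i j (mem_univ i) (mem_univ j)
      (Ne.symm hij) m
    simpa using h2
  have hthree : ∀ i : Fin (q+2), ∑ I ∈ Psets, (if i ∈ I then c I else 0)
      = (K1:ℝ) * (L i)⁻¹ + (K2:ℝ) * (A - (L i)⁻¹) := by
    intro i
    rw [hPsets, ← Finset.sum_filter, filt_insert _ i (mem_univ i) (m+1),
      Finset.sum_image (fun x hx y hy h =>
        insert_injOn _ i (m+1) (mem_coe.mpr hx) (mem_coe.mpr hy) h)]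
    have hstep : ∀ J ∈ ((univ : Finset (Fin (q+2))).erase i).powersetCard (m+1),
        c (insert i J) = (L i)⁻¹ + ∑ x ∈ J, (L x)⁻¹ := by
      intro J hJ
      have hiJ : i ∉ J := fun hh => (mem_erase.mp ((mem_powersetCard.mp hJ).1 hh)).1 rfl
      rw [hc]; exact Finset.sum_insert hiJ
    rw [Finset.sum_congr rfl hstep, Finset.sum_add_distrib, Finset.sum_const,
      card_powersetCard, sum_powersetCard_sum, card_erase_of_mem (mem_univ i),
      Finset.sum_erase_eq_sub (mem_univ i)]
    simp only [card_univ, Fintype.card_fin, nsmul_eq_mul]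
    norm_num
    rfl
  clear_value A K1 K2 eI c v G Psets p
  -- main computation
  simp only [hp, hG, hv, heI]
  ext i j
  simp only [Matrix.sum_apply, Matrix.smul_apply, smul_eq_mul, Matrix.sub_apply,
    Matrix.vecMulVec_apply, Matrix.diagonal_apply, mem_univ, if_true]
  by_cases hij : i = j
  · subst hij
    simp only [eq_self_iff_true, if_true]
    have key : ∀ I ∈ Psets,
        (c I / ∑ J ∈ Psets, c J) *
          ((if i ∈ I then (1:ℝ) else 0) * (L i)⁻¹ -
            (c I)⁻¹ * (((L i)⁻¹ * if i ∈ I then 1 else 0) * ((L i)⁻¹ * if i ∈ I then 1 else 0)))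
        = (∑ J ∈ Psets, c J)⁻¹ * (L i)⁻¹ * (if i ∈ I then c I else 0)
          - (∑ J ∈ Psets, c J)⁻¹ * ((L i)⁻¹ * (L i)⁻¹) *
            ((if i ∈ I then (1:ℝ) else 0) * (if i ∈ I then 1 else 0)) := by
      intro I hI
      have h1 : c I * (c I)⁻¹ = 1 := mul_inv_cancel₀ (hcne I hI)
      by_cases hiI : i ∈ I
      · simp only [hiI, if_true]
        linear_combination (-((∑ J ∈ Psets, c J)⁻¹ * ((L i)⁻¹ * (L i)⁻¹))) * h1
      · simp only [hiI, if_false]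
        ring
    rw [Finset.sum_congr rfl key, Finset.sum_sub_distrib]
    rw [← Finset.mul_sum, ← Finset.mul_sum, hthree i, honesq i, hS, hcuniv]
    push_cast
    have hq1 : ((q:ℝ)+2) - 1 = (q:ℝ)+1 := by ring
    have hm1 : ((m:ℝ)+2) - 1 = (m:ℝ)+1 := by ring
    rw [hq1, hm1, div_mul_eq_mul_div, eq_div_iff hqne]
    field_simp [hApos.ne', hK1ne, (hL i).ne']
    linear_combination (A * L i - 1) * hid
  · simp only [if_neg hij]
    have key : ∀ I ∈ Psets,
        (c I / ∑ J ∈ Psets, c J) *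
          ((0:ℝ) -
            (c I)⁻¹ * (((L i)⁻¹ * if i ∈ I then 1 else 0) * ((L j)⁻¹ * if j ∈ I then 1 else 0)))
        = (-((∑ J ∈ Psets, c J)⁻¹ * ((L i)⁻¹ * (L j)⁻¹))) *
            ((if i ∈ I then (1:ℝ) else 0) * (if j ∈ I then 1 else 0)) := by
      intro I hI
      have h1 : c I * (c I)⁻¹ = 1 := mul_inv_cancel₀ (hcne I hI)
      by_cases ha : i ∈ I <;> by_cases hb : j ∈ I <;>
        simp only [ha, hb, if_true, if_false]
      · linear_combination (-((∑ J ∈ Psets, c J)⁻¹ * ((L i)⁻¹ * (L j)⁻¹))) * h1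
      · ring
      · ring
      · ring
    rw [Finset.sum_congr rfl key, ← Finset.mul_sum, htwo i j hij, hS, hcuniv]
    push_cast
    have hq1 : ((q:ℝ)+2) - 1 = (q:ℝ)+1 := by ring
    have hm1 : ((m:ℝ)+2) - 1 = (m:ℝ)+1 := by ring
    rw [hq1, hm1, div_mul_eq_mul_div, eq_div_iff hqne]
    field_simp [hApos.ne', hK1ne, (hL i).ne', (hL j).ne']
    linear_combination (-1 : ℝ) * hid
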